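/- Let Φ ∈ ℝ^{m×n} and c ∈ ℝ^m, and suppose the set {x ∈ ℝ^n : Φx = c} is nonempty. Let s be the minimum of ‖x‖₀ over this set. Then the set of minimizers of ‖x‖₀ over {x ∈ ℝ^n : Φx = c} has cardinality at most the binomial coefficient C(n, s). -/

import Mathlib

/-- `‖x‖₀`: the number of nonzero components of `x`. -/
noncomputable def norm0 {n : ℕ} (x : Fin n → ℝ) : ℕ :=
  (Finset.univ.filter (fun i => x i ≠ 0)).card

/-- if `s` is the minimum of `‖·‖₀` over the nonempty set `{x | Φx = c}`,
then the set of minimizers has cardinality at most `C(n, s)`. -/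
theorem stmt_5 {m n : ℕ} (Φ : Matrix (Fin m) (Fin n) ℝ) (c : Fin m → ℝ)
    (hne : ∃ x : Fin n → ℝ, Φ.mulVec x = c) (s : ℕ)
    (hs : IsLeast {k : ℕ | ∃ x : Fin n → ℝ, Φ.mulVec x = c ∧ norm0 x = k} s) :
    Set.ncard {x : Fin n → ℝ | Φ.mulVec x = c ∧
      ∀ y : Fin n → ℝ, Φ.mulVec y = c → norm0 x ≤ norm0 y} ≤ n.choose s := by
  classical
  set M := {x : Fin n → ℝ | Φ.mulVec x = c ∧
      ∀ y : Fin n → ℝ, Φ.mulVec y = c → norm0 x ≤ norm0 y} with hM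
  obtain ⟨x0, hx0, hx0s⟩ := hs.1
  have hnorm : ∀ x ∈ M, norm0 x = s := by
    intro x hx
    have h1 : norm0 x ≤ s := hx0s ▸ hx.2 x0 hx0
    have h2 : s ≤ norm0 x := hs.2 ⟨x, hx.1, rfl⟩
    omega
  set f : (Fin n → ℝ) → Finset (Fin n) :=
    fun x => Finset.univ.filter (fun i => x i ≠ 0) with hf
  have hinj : Set.InjOn f M := by
    intro x hx y hy hxy
    by_contra hne'
    obtain ⟨i, hi⟩ := Function.ne_iff.mp hne'
    -- i with x i ≠ y i; show x i ≠ 0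
    have hmem : ∀ j, x j ≠ 0 ↔ y j ≠ 0 := by
      intro j
      constructor <;> intro h
      · have : j ∈ f x := by simp [hf, h]
        rw [hxy] at this
        simpa [hf] using this
      · have : j ∈ f y := by simp [hf, h]
        rw [← hxy] at this
        simpa [hf] using this
    have hxi : x i ≠ 0 := by
      intro h0
      have hyi : y i ≠ 0 := fun h => hi (by rw [h0, h])
      exact ((hmem i).mpr hyi) h0
    have hdiff : x i - y i ≠ 0 := sub_ne_zero_of_ne hi
    set t : ℝ := x i / (x i - y i) with ht
    set z : Fin n → ℝ := fun j => x j - t * (x j - y j) with hz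
    have hzc : Φ.mulVec z = c := by
      have : z = (x - t • (x - y)) := by
        funext j; simp [hz, Pi.smul_apply, smul_eq_mul]
      rw [this, Matrix.mulVec_sub, Matrix.mulVec_smul, Matrix.mulVec_sub,
        hx.1, hy.1]
      simp
    have hzi : z i = 0 := by
      simp only [hz, ht]
      field_simp
      simp
    have hsub : f z ⊆ (f x).erase i := by
      intro j hj
      simp only [hf, Finset.mem_filter, Finset.mem_univ, true_and] at hj
      rw [Finset.mem_erase]
      constructor
      · intro h; rw [h] at hj; exact hj hzi
      · simp only [hf, Finset.mem_filter, Finset.mem_univ, true_and]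
        intro h0
        have hy0 : y j = 0 := by
          by_contra hy0
          exact ((hmem j).mpr hy0) h0
        apply hj
        simp [hz, h0, hy0]
    have hix : i ∈ f x := by simp [hf, hxi]
    have hcard : norm0 z ≤ s - 1 := by
      have := Finset.card_le_card hsub
      rw [Finset.card_erase_of_mem hix] at this
      have hfx : (f x).card = s := hnorm x hx
      calc norm0 z = (f z).card := rfl
        _ ≤ (f x).card - 1 := this
        _ = s - 1 := by rw [hfx]
    have hs1 : 1 ≤ s := by
      have h : 0 < (f x).card := Finset.card_pos.mpr ⟨i, hix⟩
      have hfx : (f x).card = s := hnorm x hx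
      omega
    have hsz : s ≤ norm0 z := hs.2 ⟨z, hzc, rfl⟩
    omega
  calc M.ncard = (f '' M).ncard := (Set.ncard_image_of_injOn hinj).symm
    _ ≤ (↑(Finset.powersetCard s (Finset.univ : Finset (Fin n))) :
          Set (Finset (Fin n))).ncard := by
        apply Set.ncard_le_ncard _ (Set.toFinite _)
        rintro S ⟨x, hx, rfl⟩
        simp only [Finset.coe_sort_coe, Set.mem_setOf_eq, Finset.mem_coe,
          Finset.mem_powersetCard]
        exact ⟨Finset.subset_univ _, hnorm x hx⟩
    _ = n.choose s := by
        rw [Set.ncard_coe_finset, Finset.card_powersetCard, Finset.card_univ,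
          Fintype.card_fin]
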